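/- Let τ_L denote the exit time out of the interval (-L, L) for a simple symmetric random walk on ℤ started at 0. Then for all n ∈ ℕ and all integers L ≥ 2, one has exp(-n·φ(L)) ≤ P(τ_L > n) ≤ L·exp(-n·φ(L)), where φ(L) = -log cos(π/(2L)). -/

import Mathlib

open MeasureTheory ProbabilityTheory Real Finset

/-- **Exit time bounds for the simple symmetric random walk.**
Let `(X i)` be i.i.d. uniform `±1` steps, `S n = X 1 + ⋯ + X n` the simple symmetric
random walk started at `0`, and `τ_L` the exit time out of `(-L, L)`.  Then for
all `n ∈ ℕ` and integers `L ≥ 2`,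
`exp(-n·φ(L)) ≤ P(τ_L > n) ≤ L·exp(-n·φ(L))` where `φ(L) = -log cos(π/(2L))`.
The event `{τ_L > n}` is `{∀ k ≤ n, |S k| < L}`. -/
theorem srw_exit_time_bounds
    {Ω : Type*} [MeasurableSpace Ω] (μ : Measure Ω) [IsProbabilityMeasure μ]
    (X : ℕ → Ω → ℤ) (hXmeas : ∀ i, Measurable (X i))
    (hindep : iIndepFun X μ)
    (hX1 : ∀ i, μ {ω | X i ω = 1} = 1/2)
    (hXm1 : ∀ i, μ {ω | X i ω = -1} = 1/2)
    (S : ℕ → Ω → ℤ) (hS : ∀ n ω, S n ω = ∑ i ∈ Finset.range n, X i ω)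
    (L : ℕ) (hL : 2 ≤ L) (n : ℕ)
    (φ : ℝ) (hφ : φ = - Real.log (Real.cos (π / (2 * L)))) :
    ENNReal.ofReal (Real.exp (-(n : ℝ) * φ))
      ≤ μ {ω | ∀ k ≤ n, |S k ω| < (L : ℤ)} ∧
    μ {ω | ∀ k ≤ n, |S k ω| < (L : ℤ)}
      ≤ ENNReal.ofReal ((L : ℝ) * Real.exp (-(n : ℝ) * φ)) := by
  have hL2 : (2:ℝ) ≤ (L:ℝ) := by exact_mod_cast hL
  have hLpos : (0:ℝ) < L := by linarith
  set b : ℝ := π / (2 * L) with hb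
  have hb0 : 0 < b := by rw [hb]; positivity
  have hblt : b < π / 2 := by
    rw [hb]
    apply div_lt_div_of_pos_left Real.pi_pos (by norm_num) (by linarith)
  set c : ℝ := Real.cos b with hc
  have hc0 : 0 < c := Real.cos_pos_of_mem_Ioo ⟨by linarith [Real.pi_pos], hblt⟩
  set g : ℤ → ℝ := fun x => Real.cos ((x:ℝ) * b) with hg
  have hrec : ∀ x : ℤ, g (x + 1) + g (x - 1) = 2 * c * g x := by
    intro x
    simp only [hg]
    push_cast
    rw [add_mul, sub_mul, one_mul, Real.cos_add, Real.cos_sub]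
    ring
  have hone : ∀ x : ℤ, g x ≤ 1 := fun x => Real.cos_le_one _
  have habs1 : ∀ x : ℤ, |g x| ≤ 1 := fun x => Real.abs_cos_le_one _
  have hLzero : ∀ x : ℤ, |x| = (L:ℤ) → g x = 0 := by
    intro x hx
    have h1 : g x = Real.cos (|(x:ℝ)| * b) := by
      have hab : |(x:ℝ)| * b = |(x:ℝ) * b| := by rw [abs_mul, abs_of_pos hb0]
      simp only [hg]
      rw [hab, Real.cos_abs]
    have h2 : |(x:ℝ)| = (L:ℝ) := by
      rw [← Int.cast_abs, hx]; push_cast; ring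
    rw [h1, h2, show (L:ℝ) * b = π/2 by rw [hb]; field_simp, Real.cos_pi_div_two]
  have hsinb : ∀ x : ℤ, |x| < (L:ℤ) → Real.sin b ≤ g x := by
    intro x hx
    have hxle : |(x:ℝ)| ≤ (L:ℝ) - 1 := by
      rw [← Int.cast_abs]
      exact_mod_cast (by omega : |x| ≤ (L:ℤ) - 1)
    have h1 : g x = Real.cos (|(x:ℝ)| * b) := by
      have hab : |(x:ℝ)| * b = |(x:ℝ) * b| := by rw [abs_mul, abs_of_pos hb0]
      simp only [hg]
      rw [hab, Real.cos_abs]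
    have key : Real.cos (((L:ℝ)-1) * b) = Real.sin b := by
      rw [show ((L:ℝ)-1) * b = π/2 - b by rw [hb]; field_simp,
        Real.cos_pi_div_two_sub]
    rw [h1, ← key]
    apply Real.cos_le_cos_of_nonneg_of_le_pi
    · positivity
    · have h3 : ((L:ℝ)-1) * b ≤ π/2 := by
        rw [show ((L:ℝ)-1) * b = π/2 - b by rw [hb]; field_simp]
        linarith
      linarith [Real.pi_pos]
    · exact mul_le_mul_of_nonneg_right hxle hb0.le
  have hsinL : 1 / (L:ℝ) ≤ Real.sin b := by
    have h1 := Real.mul_le_sin hb0.le hblt.le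
    have h2 : 2/π * b = 1/(L:ℝ) := by
      rw [hb]; field_simp
    linarith
  -- measurability
  have hSmeas : ∀ k, Measurable (S k) := by
    intro k
    have : S k = fun ω => ∑ i ∈ Finset.range k, X i ω := funext fun ω => hS k ω
    rw [this]
    exact Finset.measurable_sum _ fun i _ => hXmeas i
  set A : ℕ → Set Ω := fun m => {ω | ∀ k ≤ m, |S k ω| < (L:ℤ)} with hA
  have hAmeas : ∀ m, MeasurableSet (A m) := by
    intro m
    have hAe : A m = ⋂ k, ⋂ (_ : k ≤ m), (S k) ⁻¹' {z : ℤ | |z| < (L:ℤ)} := by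
      ext ω; simp [hA]
    rw [hAe]
    exact MeasurableSet.iInter fun k => MeasurableSet.iInter fun _ =>
      hSmeas k ((Set.to_countable _).measurableSet)
  have hint : ∀ (u : Ω → ℝ), Measurable u → (∀ ω, |u ω| ≤ 1) → Integrable u μ := by
    intro u hu hbd
    exact (integrable_const (1:ℝ)).mono' hu.aestronglyMeasurable
      (Filter.Eventually.of_forall fun ω => by simpa [Real.norm_eq_abs] using hbd ω)
  set F : ℕ → ℤ → Ω → ℝ := fun m cc => Set.indicator (A m) (fun ω => g (S m ω + cc)) with hF
  have hFmeas : ∀ m cc, Measurable (F m cc) := fun m cc =>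
    ((measurable_of_countable (fun z : ℤ => g (z + cc))).comp (hSmeas m)).indicator (hAmeas m)
  have hFbd : ∀ m cc ω, |F m cc ω| ≤ 1 := by
    intro m cc ω
    simp only [hF]
    simp only [Set.indicator_apply]
    split
    · exact habs1 _
    · simp
  have hFint : ∀ m cc, Integrable (F m cc) μ := fun m cc => hint _ (hFmeas m cc) (hFbd m cc)
  have hvmeas : ∀ m (v : ℤ), MeasurableSet {ω | X m ω = v} := fun m v =>
    hXmeas m (show MeasurableSet {z : ℤ | z = v} from (Set.to_countable _).measurableSet)
  have hGmeas : ∀ m (v : ℤ),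
      Measurable (Set.indicator {ω | X m ω = v} (fun _ => (1:ℝ))) := fun m v =>
    measurable_const.indicator (hvmeas m v)
  have hGbd : ∀ m (v : ℤ) ω, |Set.indicator {ω | X m ω = v} (fun _ => (1:ℝ)) ω| ≤ 1 := by
    intro m v ω
    rw [Set.indicator_apply]
    split <;> simp
  -- the key recursion
  have hstep : ∀ m, (∫ ω, F (m+1) 0 ω ∂μ) = c * ∫ ω, F m 0 ω ∂μ := by
    intro m
    -- product formula via independence
    have hprod : ∀ cc v : ℤ,
        ∫ ω, F m cc ω * Set.indicator {ω | X m ω = v} (fun _ => (1:ℝ)) ω ∂μ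
          = (∫ ω, F m cc ω ∂μ) * (μ {ω | X m ω = v}).toReal := by
      intro cc v
      have hT : IndepFun (fun ω (i : (Finset.range m : Finset ℕ)) => X i ω) (X m) μ := by
        have h1 := hindep.indepFun_finset (Finset.range m) {m} (by simp) hXmeas
        exact h1.comp measurable_id
          (measurable_pi_apply (⟨m, Finset.mem_singleton_self m⟩ : ({m} : Finset ℕ)))
      set Φ : ({i : ℕ // i ∈ Finset.range m} → ℤ) → ℝ := fun w =>
        Set.indicator
          {w : {i : ℕ // i ∈ Finset.range m} → ℤ | ∀ k ≤ m,
            |∑ i ∈ Finset.range k, (if hi : i ∈ Finset.range m then w ⟨i, hi⟩ else 0)| < (L:ℤ)}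
          (fun w => g ((∑ i ∈ Finset.range m,
            (if hi : i ∈ Finset.range m then w ⟨i, hi⟩ else 0)) + cc)) w with hΦ
      set Ψ : ℤ → ℝ := fun z => Set.indicator {z : ℤ | z = v} (fun _ => (1:ℝ)) z with hΨ
      have hFG := hT.comp (measurable_of_countable Φ) (measurable_of_countable Ψ)
      have hpsum : ∀ (ω : Ω) (k : ℕ), k ≤ m →
          (∑ i ∈ Finset.range k, (if hi : i ∈ Finset.range m then X i ω else 0)) = S k ω := by
        intro ω k hk
        rw [hS]
        apply Finset.sum_congr rfl
        intro i hi
        rw [dif_pos (Finset.mem_range.2 (lt_of_lt_of_le (Finset.mem_range.1 hi) hk))]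
      have hΦT : (Φ ∘ (fun ω (i : (Finset.range m : Finset ℕ)) => X i ω)) = F m cc := by
        funext ω
        simp only [Function.comp_apply, hΦ, hF, Set.indicator_apply, Set.mem_setOf_eq]
        have hcond : (∀ k ≤ m,
            |∑ i ∈ Finset.range k, (if hi : i ∈ Finset.range m then X i ω else 0)| < (L:ℤ))
            ↔ ω ∈ A m := by
          constructor
          · intro hw k hk; have h3 := hw k hk; rwa [hpsum ω k hk] at h3
          · intro hw k hk; rw [hpsum ω k hk]; exact hw k hk
        by_cases hmem : ω ∈ A m
        · rw [if_pos (hcond.2 hmem), if_pos hmem, hpsum ω m le_rfl]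
        · rw [if_neg (fun hw => hmem (hcond.1 hw)), if_neg hmem]
      have hΨX : (Ψ ∘ X m) = Set.indicator {ω | X m ω = v} (fun _ => (1:ℝ)) := by
        funext ω
        simp only [Function.comp_apply, hΨ, Set.indicator_apply, Set.mem_setOf_eq]
      rw [hΦT, hΨX] at hFG
      have hGint : Integrable (Set.indicator {ω | X m ω = v} (fun _ => (1:ℝ))) μ :=
        hint _ (hGmeas m v) (hGbd m v)
      have hmul := IndepFun.integral_mul_eq_mul_integral
        (show IndepFun (F m cc) (Set.indicator {ω | X m ω = v} (fun _ => (1:ℝ))) μ from hFG)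
        (hFint m cc).1 hGint.1
      have hGval : ∫ ω, Set.indicator {ω | X m ω = v} (fun _ => (1:ℝ)) ω ∂μ
          = (μ {ω | X m ω = v}).toReal := by
        rw [MeasureTheory.integral_indicator_const (1:ℝ) (hvmeas m v)]
        simp [Measure.real]
      calc ∫ ω, F m cc ω * Set.indicator {ω | X m ω = v} (fun _ => (1:ℝ)) ω ∂μ
          = integral μ (F m cc * Set.indicator {ω | X m ω = v} (fun _ => (1:ℝ))) := rfl
        _ = (∫ ω, F m cc ω ∂μ) * ∫ ω, Set.indicator {ω | X m ω = v} (fun _ => (1:ℝ)) ω ∂μ := hmul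
        _ = (∫ ω, F m cc ω ∂μ) * (μ {ω | X m ω = v}).toReal := by rw [hGval]
    -- a.e. decomposition
    have hae : ∀ᵐ ω ∂μ, X m ω = 1 ∨ X m ω = -1 := by
      have hdisj : Disjoint {ω | X m ω = 1} {ω | X m ω = -1} := by
        rw [Set.disjoint_left]
        intro ω h1 h2
        simp only [Set.mem_setOf_eq] at h1 h2
        omega
      have hu : μ ({ω | X m ω = 1} ∪ {ω | X m ω = -1}) = 1 := by
        rw [measure_union hdisj (hvmeas m (-1)), hX1, hXm1, ENNReal.add_halves]
      have hcompl : μ ({ω | X m ω = 1} ∪ {ω | X m ω = -1})ᶜ = 0 := by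
        rw [measure_compl ((hvmeas m 1).union (hvmeas m (-1))) (measure_ne_top μ _), hu,
          measure_univ, tsub_self]
      have hset : {ω | ¬(X m ω = 1 ∨ X m ω = -1)}
          = ({ω | X m ω = 1} ∪ {ω | X m ω = -1})ᶜ := by
        ext ω; simp [not_or]
      rw [ae_iff, hset]
      exact hcompl
    have hsub : A (m+1) ⊆ A m := fun ω' hω' k hk => hω' k (le_trans hk (Nat.le_succ m))
    have hsplit : (fun ω => F (m+1) 0 ω) =ᵐ[μ]
        fun ω => F m 1 ω * Set.indicator {ω | X m ω = 1} (fun _ => (1:ℝ)) ω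
               + F m (-1) ω * Set.indicator {ω | X m ω = -1} (fun _ => (1:ℝ)) ω := by
      filter_upwards [hae] with ω hω
      have hstep1 : S (m+1) ω = S m ω + X m ω := by
        rw [hS, hS, Finset.sum_range_succ]
      rcases hω with h1 | h1
      · have e1 : Set.indicator {ω | X m ω = 1} (fun _ => (1:ℝ)) ω = 1 :=
          Set.indicator_of_mem (show ω ∈ {ω | X m ω = _} from h1) _
        have e2 : Set.indicator {ω | X m ω = -1} (fun _ => (1:ℝ)) ω = 0 :=
          Set.indicator_of_notMem (by simp only [Set.mem_setOf_eq, h1]; omega) _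
        rw [e1, e2, mul_one, mul_zero, add_zero]
        rw [h1] at hstep1
        by_cases hm1 : ω ∈ A (m+1)
        · simp only [hF]; rw [Set.indicator_of_mem hm1, Set.indicator_of_mem (hsub hm1), add_zero, hstep1]
        · simp only [hF]; rw [Set.indicator_of_notMem hm1]
          by_cases hm0 : ω ∈ A m
          · rw [Set.indicator_of_mem hm0]
            have hSm : |S m ω| < (L:ℤ) := hm0 m le_rfl
            have hnot : ¬ |S (m+1) ω| < (L:ℤ) := by
              intro hcon
              apply hm1
              intro k hk
              rcases Nat.lt_or_ge k (m+1) with hk' | hk'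
              · exact hm0 k (Nat.lt_succ_iff.1 hk')
              · have hkeq : k = m+1 := le_antisymm hk hk'
                rwa [hkeq]
            rw [hstep1] at hnot
            have habsL : |S m ω + 1| = (L:ℤ) := by
              rw [abs_lt] at hSm
              rw [abs_lt, not_and_or, not_lt, not_lt] at hnot
              rw [abs_eq (by omega : (0:ℤ) ≤ (L:ℤ))]
              omega
            exact (hLzero _ habsL).symm
          · rw [Set.indicator_of_notMem hm0]
      · have e1 : Set.indicator {ω | X m ω = 1} (fun _ => (1:ℝ)) ω = 0 :=
          Set.indicator_of_notMem (by simp only [Set.mem_setOf_eq, h1]; omega) _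
        have e2 : Set.indicator {ω | X m ω = -1} (fun _ => (1:ℝ)) ω = 1 :=
          Set.indicator_of_mem (show ω ∈ {ω | X m ω = _} from h1) _
        rw [e1, e2, mul_one, mul_zero, zero_add]
        rw [h1] at hstep1
        by_cases hm1 : ω ∈ A (m+1)
        · simp only [hF]; rw [Set.indicator_of_mem hm1, Set.indicator_of_mem (hsub hm1), add_zero, hstep1]
        · simp only [hF]; rw [Set.indicator_of_notMem hm1]
          by_cases hm0 : ω ∈ A m
          · rw [Set.indicator_of_mem hm0]
            have hSm : |S m ω| < (L:ℤ) := hm0 m le_rfl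
            have hnot : ¬ |S (m+1) ω| < (L:ℤ) := by
              intro hcon
              apply hm1
              intro k hk
              rcases Nat.lt_or_ge k (m+1) with hk' | hk'
              · exact hm0 k (Nat.lt_succ_iff.1 hk')
              · have hkeq : k = m+1 := le_antisymm hk hk'
                rwa [hkeq]
            rw [hstep1] at hnot
            have habsL : |S m ω + (-1)| = (L:ℤ) := by
              rw [abs_lt] at hSm
              rw [abs_lt, not_and_or, not_lt, not_lt] at hnot
              rw [abs_eq (by omega : (0:ℤ) ≤ (L:ℤ))]
              omega
            exact (hLzero _ habsL).symm
          · rw [Set.indicator_of_notMem hm0]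
    have hint1 : Integrable
        (fun ω => F m 1 ω * Set.indicator {ω | X m ω = 1} (fun _ => (1:ℝ)) ω) μ := by
      apply hint _ ((hFmeas m 1).mul (hGmeas m 1))
      intro ω
      rw [Pi.mul_apply, abs_mul]
      exact mul_le_one₀ (hFbd m 1 ω) (abs_nonneg _) (hGbd m 1 ω)
    have hint2 : Integrable
        (fun ω => F m (-1) ω * Set.indicator {ω | X m ω = -1} (fun _ => (1:ℝ)) ω) μ := by
      apply hint _ ((hFmeas m (-1)).mul (hGmeas m (-1)))
      intro ω
      rw [Pi.mul_apply, abs_mul]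
      exact mul_le_one₀ (hFbd m (-1) ω) (abs_nonneg _) (hGbd m (-1) ω)
    have hpt : ∀ ω, F m 1 ω + F m (-1) ω = (2*c) * F m 0 ω := by
      intro ω
      simp only [hF]
      by_cases hm0 : ω ∈ A m
      · rw [Set.indicator_of_mem hm0, Set.indicator_of_mem hm0, Set.indicator_of_mem hm0]
        have h5 := hrec (S m ω)
        rw [show S m ω + (-1) = S m ω - 1 by ring, add_zero]
        linarith
      · simp [Set.indicator_of_notMem hm0]
    calc ∫ ω, F (m+1) 0 ω ∂μ
        = ∫ ω, (F m 1 ω * Set.indicator {ω | X m ω = 1} (fun _ => (1:ℝ)) ω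
               + F m (-1) ω * Set.indicator {ω | X m ω = -1} (fun _ => (1:ℝ)) ω) ∂μ :=
          integral_congr_ae hsplit
      _ = (∫ ω, F m 1 ω * Set.indicator {ω | X m ω = 1} (fun _ => (1:ℝ)) ω ∂μ)
          + ∫ ω, F m (-1) ω * Set.indicator {ω | X m ω = -1} (fun _ => (1:ℝ)) ω ∂μ :=
          integral_add hint1 hint2
      _ = (∫ ω, F m 1 ω ∂μ) * (μ {ω | X m ω = 1}).toReal
          + (∫ ω, F m (-1) ω ∂μ) * (μ {ω | X m ω = -1}).toReal := by
          rw [hprod 1 1, hprod (-1) (-1)]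
      _ = ((∫ ω, F m 1 ω ∂μ) + (∫ ω, F m (-1) ω ∂μ)) * (1/2) := by
          rw [hX1 m, hXm1 m]
          norm_num
          ring
      _ = (∫ ω, (F m 1 ω + F m (-1) ω) ∂μ) * (1/2) := by
          rw [integral_add (hFint m 1) (hFint m (-1))]
      _ = (∫ ω, (2*c) * F m 0 ω ∂μ) * (1/2) := by
          congr 1
          exact integral_congr_ae (Filter.Eventually.of_forall hpt)
      _ = c * ∫ ω, F m 0 ω ∂μ := by
          rw [MeasureTheory.integral_const_mul]
          ring
  -- f m = c ^ m
  have hf0 : (∫ ω, F 0 0 ω ∂μ) = 1 := by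
    have hA0 : A 0 = Set.univ := by
      ext ω
      simp only [hA, Set.mem_setOf_eq, Set.mem_univ, iff_true]
      intro k hk
      rw [Nat.le_zero.1 hk, hS]
      simp only [Finset.range_zero, Finset.sum_empty, abs_zero]
      exact_mod_cast (by omega : 0 < L)
    have hptv : ∀ ω, F 0 0 ω = 1 := by
      intro ω
      simp only [hF]; rw [hA0, Set.indicator_univ, hS]
      simp [hg]
    rw [integral_congr_ae (Filter.Eventually.of_forall hptv)]
    simp
  have hfn : ∀ m, (∫ ω, F m 0 ω ∂μ) = c ^ m := by
    intro m
    induction m with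
    | zero => simpa using hf0
    | succ k ih => rw [hstep k, ih, pow_succ]; ring
  -- bounds
  have hup : (∫ ω, F n 0 ω ∂μ) ≤ (μ (A n)).toReal := by
    have h1 : ∫ ω, Set.indicator (A n) (fun _ => (1:ℝ)) ω ∂μ = (μ (A n)).toReal := by
      rw [MeasureTheory.integral_indicator_const (1:ℝ) (hAmeas n)]
      simp [Measure.real]
    rw [← h1]
    apply integral_mono (hFint n 0) (hint _ (measurable_const.indicator (hAmeas n))
      (fun ω => by rw [Set.indicator_apply]; split <;> simp))
    intro ω
    by_cases hm : ω ∈ A n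
    · simp only [hF]; rw [Set.indicator_of_mem hm, Set.indicator_of_mem hm]
      exact hone _
    · simp only [hF]; rw [Set.indicator_of_notMem hm, Set.indicator_of_notMem hm]
  have hlow : (μ (A n)).toReal * (1/(L:ℝ)) ≤ ∫ ω, F n 0 ω ∂μ := by
    have h1 : ∫ ω, Set.indicator (A n) (fun _ => (1/(L:ℝ))) ω ∂μ
        = (μ (A n)).toReal * (1/(L:ℝ)) := by
      rw [MeasureTheory.integral_indicator_const _ (hAmeas n)]
      simp [smul_eq_mul, Measure.real]
    rw [← h1]
    apply integral_mono (hint _ (measurable_const.indicator (hAmeas n))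
      (fun ω => by
        rw [Set.indicator_apply]
        split
        · rw [abs_of_nonneg (by positivity)]
          rw [div_le_one hLpos]
          linarith
        · simp)) (hFint n 0)
    intro ω
    by_cases hm : ω ∈ A n
    · simp only [hF]; rw [Set.indicator_of_mem hm, Set.indicator_of_mem hm, add_zero]
      exact le_trans hsinL (hsinb _ (hm n le_rfl))
    · simp only [hF]; rw [Set.indicator_of_notMem hm, Set.indicator_of_notMem hm]
  have hexp : Real.exp (-(n:ℝ) * φ) = c ^ n := by
    rw [hφ, show -(n:ℝ) * (-Real.log (Real.cos (π/(2*(L:ℝ))))) = (n:ℝ) * Real.log c by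
      rw [hc, hb]; ring]
    rw [Real.exp_nat_mul, Real.exp_log hc0]
  constructor
  · have h2 : c ^ n ≤ (μ (A n)).toReal := (hfn n) ▸ hup
    calc ENNReal.ofReal (Real.exp (-(n:ℝ)*φ)) = ENNReal.ofReal (c^n) := by rw [hexp]
      _ ≤ ENNReal.ofReal ((μ (A n)).toReal) := ENNReal.ofReal_le_ofReal h2
      _ = μ (A n) := ENNReal.ofReal_toReal (measure_ne_top μ _)
  · have h2 : (μ (A n)).toReal ≤ (L:ℝ) * c ^ n := by
      have h3 := hlow
      rw [hfn n] at h3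
      have h4 := mul_le_mul_of_nonneg_right h3 hLpos.le
      rw [mul_assoc, one_div, inv_mul_cancel₀ hLpos.ne', mul_one] at h4
      linarith
    calc μ (A n) = ENNReal.ofReal ((μ (A n)).toReal) :=
        (ENNReal.ofReal_toReal (measure_ne_top μ _)).symm
      _ ≤ ENNReal.ofReal ((L:ℝ) * Real.exp (-(n:ℝ)*φ)) :=
        ENNReal.ofReal_le_ofReal (by rw [hexp]; exact h2)
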